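/- Let $\hat{A}$ be a symmetric matrix with all eigenvalues in $[-1,1]$, let $\alpha > 0$, and let $X \in \mathbb{R}^{N\times d}$. Define the exact solution $H^* = \frac{1}{1+\alpha}\sum_{\ell=0}^{\infty}\left(\frac{\alpha}{1+\alpha}\right)^{\ell}\hat{A}^{\ell} X$ and the truncated approximation $H = \frac{1}{1+\alpha}\sum_{\ell=0}^{L}\left(\frac{\alpha}{1+\alpha}\right)^{\ell}\hat{A}^{\ell} X + \left(\frac{\alpha}{1+\alpha}\right)^{L+1}\hat{A}^{L} X$. Then $\|H - H^*\|_F \le \sum_{\ell=L+1}^{\infty} \frac{\alpha^{\ell}}{(1+\alpha)^{\ell+1}} \|\hat{A}^{\ell} - \hat{A}^{L}\|_2 \cdot \|X\|_F$, which is further bounded by $\left(\frac{\alpha}{1+\alpha}\right)^{L+1} \|X\|_F \cdot \max_{\ell \ge 1} \mu_{L, L+\ell}$, where $\mu_{L_1,L_2} = \max_{1\le i \le N} |\lambda_i(\hat{A})^{L_1} - \lambda_i(\hat{A})^{L_2}|$. -/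

import Mathlib

open Matrix BigOperators
open scoped Matrix.Norms.L2Operator

lemma euclid_norm_sq {n : ℕ} (w : Fin n → ℝ) :
    ‖(EuclideanSpace.equiv (Fin n) ℝ).symm w‖ ^ 2 = ∑ i, (w i) ^ 2 := by
  rw [EuclideanSpace.norm_eq, Real.sq_sqrt (by positivity)]
  simp [sq_abs]

lemma opNorm_le_of_mulVec {m n : ℕ} (M : Matrix (Fin m) (Fin n) ℝ) (c : ℝ) (hc : 0 ≤ c)
    (h : ∀ x : EuclideanSpace ℝ (Fin n),
      ‖(EuclideanSpace.equiv (Fin m) ℝ).symm (M *ᵥ x)‖ ≤ c * ‖x‖) :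
    ‖M‖ ≤ c := by
  rw [Matrix.l2_opNorm_def]
  exact ContinuousLinearMap.opNorm_le_bound _ hc (fun x => h x)

lemma opNorm_diagonal_le {n : ℕ} (v : Fin n → ℝ) (c : ℝ) (hc : 0 ≤ c)
    (hv : ∀ i, |v i| ≤ c) : ‖Matrix.diagonal v‖ ≤ c := by
  apply opNorm_le_of_mulVec _ c hc
  intro x
  rw [EuclideanSpace.norm_eq, EuclideanSpace.norm_eq]
  rw [← Real.sqrt_mul_self hc, ← Real.sqrt_mul (by positivity)]
  apply Real.sqrt_le_sqrt
  rw [Finset.mul_sum]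
  apply Finset.sum_le_sum
  intro i _
  have h1 : ((EuclideanSpace.equiv (Fin n) ℝ).symm (Matrix.diagonal v *ᵥ (x : Fin n → ℝ))) i
      = v i * x i := by
    simp [Matrix.mulVec_diagonal]
  rw [h1, norm_mul, mul_pow]
  have h2 : ‖v i‖ ≤ c := by rw [Real.norm_eq_abs]; exact hv i
  have h3 : (0:ℝ) ≤ ‖x i‖ ^ 2 := by positivity
  have h4 : ‖v i‖ ^ 2 ≤ c * c := by nlinarith [norm_nonneg (v i)]
  nlinarith

lemma opNorm_one_le {n : ℕ} : ‖(1 : Matrix (Fin n) (Fin n) ℝ)‖ ≤ 1 := by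
  rw [← Matrix.diagonal_one]
  exact opNorm_diagonal_le _ 1 one_pos.le (fun i => by simp)

lemma opNorm_unitary_le {n : ℕ} (U : Matrix.unitaryGroup (Fin n) ℝ) :
    ‖(U : Matrix (Fin n) (Fin n) ℝ)‖ ≤ 1 := by
  have h1 : ‖(U : Matrix (Fin n) (Fin n) ℝ)ᴴ * U‖ = ‖(U : Matrix (Fin n) (Fin n) ℝ)‖ *
      ‖(U : Matrix (Fin n) (Fin n) ℝ)‖ := Matrix.l2_opNorm_conjTranspose_mul_self _
  have h2 : (U : Matrix (Fin n) (Fin n) ℝ)ᴴ * U = 1 := by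
    rw [← Matrix.star_eq_conjTranspose]
    exact Matrix.UnitaryGroup.star_mul_self U
  rw [h2] at h1
  nlinarith [norm_nonneg (U : Matrix (Fin n) (Fin n) ℝ), opNorm_one_le (n := n)]

lemma herm_pow_eq {n : ℕ} {A : Matrix (Fin n) (Fin n) ℝ} (hA : A.IsHermitian) (k : ℕ) :
    A ^ k = (hA.eigenvectorUnitary : Matrix (Fin n) (Fin n) ℝ) *
      Matrix.diagonal (fun i => hA.eigenvalues i ^ k) *
      (star (hA.eigenvectorUnitary : Matrix (Fin n) (Fin n) ℝ)) := by
  have hd : Matrix.diagonal (RCLike.ofReal ∘ hA.eigenvalues) = Matrix.diagonal hA.eigenvalues := by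
    congr 1
  have h1 : A = (hA.eigenvectorUnitary : Matrix (Fin n) (Fin n) ℝ) *
      Matrix.diagonal hA.eigenvalues * (star (hA.eigenvectorUnitary : Matrix (Fin n) (Fin n) ℝ)) :=
    hA.spectral_theorem.trans (by rw [hd]; rfl)
  induction k with
  | zero =>
    rw [pow_zero, show (fun i => hA.eigenvalues i ^ 0) = fun _ : Fin n => (1:ℝ) from
      funext fun i => pow_zero _, Matrix.diagonal_one, mul_one]
    exact ((Matrix.mem_unitaryGroup_iff).mp hA.eigenvectorUnitary.2).symm
  | succ k ih =>
    rw [pow_succ, ih]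
    rw [show (fun i => hA.eigenvalues i ^ (k+1)) = fun i => hA.eigenvalues i ^ k * hA.eigenvalues i
      from funext fun i => by ring, ← Matrix.diagonal_mul_diagonal]
    have hrw : ((hA.eigenvectorUnitary : Matrix (Fin n) (Fin n) ℝ) *
        Matrix.diagonal (fun i => hA.eigenvalues i ^ k) *
        (star (hA.eigenvectorUnitary : Matrix (Fin n) (Fin n) ℝ))) * A
      = ((hA.eigenvectorUnitary : Matrix (Fin n) (Fin n) ℝ) *
        Matrix.diagonal (fun i => hA.eigenvalues i ^ k) *
        (star (hA.eigenvectorUnitary : Matrix (Fin n) (Fin n) ℝ))) *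
        ((hA.eigenvectorUnitary : Matrix (Fin n) (Fin n) ℝ) *
        Matrix.diagonal hA.eigenvalues *
        (star (hA.eigenvectorUnitary : Matrix (Fin n) (Fin n) ℝ))) := congrArg _ h1
    rw [hrw]
    have hsu : (star (hA.eigenvectorUnitary : Matrix (Fin n) (Fin n) ℝ)) *
        (hA.eigenvectorUnitary : Matrix (Fin n) (Fin n) ℝ) = 1 :=
      Matrix.UnitaryGroup.star_mul_self hA.eigenvectorUnitary
    calc (hA.eigenvectorUnitary : Matrix (Fin n) (Fin n) ℝ) *
          Matrix.diagonal (fun i => hA.eigenvalues i ^ k) *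
          (star (hA.eigenvectorUnitary : Matrix (Fin n) (Fin n) ℝ)) *
          ((hA.eigenvectorUnitary : Matrix (Fin n) (Fin n) ℝ) *
            Matrix.diagonal hA.eigenvalues *
            (star (hA.eigenvectorUnitary : Matrix (Fin n) (Fin n) ℝ)))
        = (hA.eigenvectorUnitary : Matrix (Fin n) (Fin n) ℝ) *
          Matrix.diagonal (fun i => hA.eigenvalues i ^ k) *
          ((star (hA.eigenvectorUnitary : Matrix (Fin n) (Fin n) ℝ)) *
            (hA.eigenvectorUnitary : Matrix (Fin n) (Fin n) ℝ)) *
          Matrix.diagonal hA.eigenvalues *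
          (star (hA.eigenvectorUnitary : Matrix (Fin n) (Fin n) ℝ)) := by
          simp only [mul_assoc]
      _ = _ := by rw [hsu, mul_one, mul_assoc _ (Matrix.diagonal _) (Matrix.diagonal _)]

lemma herm_pow_sub_norm_le {n : ℕ} {A : Matrix (Fin n) (Fin n) ℝ} (hA : A.IsHermitian)
    (k j : ℕ) (c : ℝ) (hc : 0 ≤ c) (h : ∀ i, |hA.eigenvalues i ^ k - hA.eigenvalues i ^ j| ≤ c) :
    ‖A ^ k - A ^ j‖ ≤ c := by
  rw [herm_pow_eq hA k, herm_pow_eq hA j, ← Matrix.sub_mul, ← Matrix.mul_sub]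
  have hdiag : (Matrix.diagonal fun i => hA.eigenvalues i ^ k) -
      (Matrix.diagonal fun i => hA.eigenvalues i ^ j)
      = Matrix.diagonal (fun i => hA.eigenvalues i ^ k - hA.eigenvalues i ^ j) := by
    rw [← Matrix.diagonal_sub]
  rw [hdiag]
  set U := (hA.eigenvectorUnitary : Matrix (Fin n) (Fin n) ℝ)
  calc ‖U * Matrix.diagonal (fun i => hA.eigenvalues i ^ k - hA.eigenvalues i ^ j) * star U‖
      ≤ ‖U * Matrix.diagonal (fun i => hA.eigenvalues i ^ k - hA.eigenvalues i ^ j)‖ * ‖star U‖ :=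
        Matrix.l2_opNorm_mul _ _
    _ ≤ ‖U‖ * ‖Matrix.diagonal (fun i => hA.eigenvalues i ^ k - hA.eigenvalues i ^ j)‖ * ‖star U‖ := by
        exact mul_le_mul_of_nonneg_right (Matrix.l2_opNorm_mul _ _) (norm_nonneg _)
    _ ≤ 1 * c * 1 := by
        have h1 : ‖U‖ ≤ 1 := opNorm_unitary_le _
        have h2 : ‖star U‖ ≤ 1 := by
          rw [Matrix.star_eq_conjTranspose, Matrix.l2_opNorm_conjTranspose]; exact h1
        have h3 : ‖Matrix.diagonal (fun i => hA.eigenvalues i ^ k - hA.eigenvalues i ^ j)‖ ≤ c :=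
          opNorm_diagonal_le _ c hc h
        have hd0 := norm_nonneg (Matrix.diagonal (fun i => hA.eigenvalues i ^ k - hA.eigenvalues i ^ j))
        have e1 : ‖U‖ * ‖Matrix.diagonal (fun i => hA.eigenvalues i ^ k - hA.eigenvalues i ^ j)‖
            ≤ 1 * c := mul_le_mul h1 h3 hd0 one_pos.le
        exact mul_le_mul e1 h2 (norm_nonneg _) (by nlinarith)
    _ = c := by ring

lemma herm_pow_norm_le {n : ℕ} {A : Matrix (Fin n) (Fin n) ℝ} (hA : A.IsHermitian)
    (heig : ∀ i, |hA.eigenvalues i| ≤ 1) (k : ℕ) : ‖A ^ k‖ ≤ 1 := by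
  rw [herm_pow_eq hA k]
  set U := (hA.eigenvectorUnitary : Matrix (Fin n) (Fin n) ℝ)
  have h3 : ‖Matrix.diagonal (fun i => hA.eigenvalues i ^ k)‖ ≤ 1 := by
    apply opNorm_diagonal_le _ 1 one_pos.le
    intro i
    rw [abs_pow]
    exact pow_le_one₀ (abs_nonneg _) (heig i)
  have h1 : ‖U‖ ≤ 1 := opNorm_unitary_le _
  have h2 : ‖star U‖ ≤ 1 := by
    rw [Matrix.star_eq_conjTranspose, Matrix.l2_opNorm_conjTranspose]; exact h1
  calc ‖U * Matrix.diagonal (fun i => hA.eigenvalues i ^ k) * star U‖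
      ≤ ‖U * Matrix.diagonal (fun i => hA.eigenvalues i ^ k)‖ * ‖star U‖ :=
        Matrix.l2_opNorm_mul _ _
    _ ≤ 1 := by
        have h4 := Matrix.l2_opNorm_mul U (Matrix.diagonal (fun i => hA.eigenvalues i ^ k))
        have := norm_nonneg (U * Matrix.diagonal (fun i => hA.eigenvalues i ^ k))
        nlinarith [norm_nonneg U, norm_nonneg (star U),
          norm_nonneg (Matrix.diagonal (fun i => hA.eigenvalues i ^ k))]

noncomputable def eL (N d : ℕ) : Matrix (Fin N) (Fin d) ℝ →ₗ[ℝ] EuclideanSpace ℝ (Fin N × Fin d) where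
  toFun M := (WithLp.equiv 2 _).symm (fun p => M p.1 p.2)
  map_add' _ _ := rfl
  map_smul' _ _ := rfl

lemma eL_norm {N d : ℕ} (M : Matrix (Fin N) (Fin d) ℝ) :
    ‖eL N d M‖ = Real.sqrt (∑ i, ∑ k, (M i k) ^ 2) := by
  rw [EuclideanSpace.norm_eq]
  congr 1
  rw [Fintype.sum_prod_type]
  apply Finset.sum_congr rfl
  intro p _
  simp [eL, Real.norm_eq_abs, sq_abs]

lemma frob_mul_le {N d : ℕ} (M : Matrix (Fin N) (Fin N) ℝ) (X : Matrix (Fin N) (Fin d) ℝ) :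
    Real.sqrt (∑ i, ∑ k, ((M * X) i k) ^ 2) ≤ ‖M‖ * Real.sqrt (∑ i, ∑ k, (X i k) ^ 2) := by
  have col : ∀ k, ∑ i, ((M * X) i k) ^ 2 ≤ ‖M‖ ^ 2 * ∑ j, (X j k) ^ 2 := by
    intro k
    set x : EuclideanSpace ℝ (Fin N) := (EuclideanSpace.equiv (Fin N) ℝ).symm (fun j => X j k)
    have h1 : ∑ i, ((M * X) i k) ^ 2
        = ‖(EuclideanSpace.equiv (Fin N) ℝ).symm (M *ᵥ x)‖ ^ 2 := by
      rw [euclid_norm_sq]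
      apply Finset.sum_congr rfl
      intro i _
      rfl
    have h2 := Matrix.l2_opNorm_mulVec M x
    have h3 : ‖x‖ ^ 2 = ∑ j, (X j k) ^ 2 := euclid_norm_sq _
    have h4 : ‖(EuclideanSpace.equiv (Fin N) ℝ).symm (M *ᵥ x)‖ ^ 2 ≤ (‖M‖ * ‖x‖) ^ 2 := by
      have := norm_nonneg ((EuclideanSpace.equiv (Fin N) ℝ).symm (M *ᵥ x))
      nlinarith [norm_nonneg x, norm_nonneg M]
    rw [h1]
    calc ‖(EuclideanSpace.equiv (Fin N) ℝ).symm (M *ᵥ x)‖ ^ 2 ≤ (‖M‖ * ‖x‖) ^ 2 := h4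
      _ = ‖M‖ ^ 2 * ∑ j, (X j k) ^ 2 := by rw [mul_pow, h3]
  have key : ∑ i, ∑ k, ((M * X) i k) ^ 2 ≤ ‖M‖ ^ 2 * ∑ i, ∑ k, (X i k) ^ 2 := by
    rw [Finset.sum_comm]
    calc ∑ k, ∑ i, ((M * X) i k) ^ 2 ≤ ∑ k, ‖M‖ ^ 2 * ∑ j, (X j k) ^ 2 :=
          Finset.sum_le_sum (fun k _ => col k)
      _ = ‖M‖ ^ 2 * ∑ k, ∑ j, (X j k) ^ 2 := by rw [Finset.mul_sum]
      _ = ‖M‖ ^ 2 * ∑ i, ∑ k, (X i k) ^ 2 := by rw [Finset.sum_comm]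
  calc Real.sqrt (∑ i, ∑ k, ((M * X) i k) ^ 2)
      ≤ Real.sqrt (‖M‖ ^ 2 * ∑ i, ∑ k, (X i k) ^ 2) := Real.sqrt_le_sqrt key
    _ = ‖M‖ * Real.sqrt (∑ i, ∑ k, (X i k) ^ 2) := by
        rw [Real.sqrt_mul (by positivity), Real.sqrt_sq (norm_nonneg _)]

/-- Error bound for the truncated Neumann-series approximation of the feature
matrix.  `‖·‖` is the spectral (L2 operator) norm; the Frobenius norm is written
out as the square root of the sum of squared entries.  `μ L₁ L₂` is the
`(L₁,L₂)`-order maximum eigengap of the symmetric matrix `Â`. -/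
theorem truncated_feature_error_bound (N d : ℕ) (α : ℝ) (hα : 0 < α)
    (Ahat : Matrix (Fin N) (Fin N) ℝ) (hA : Ahat.IsHermitian)
    (heig : ∀ i, |hA.eigenvalues i| ≤ 1)
    (X : Matrix (Fin N) (Fin d) ℝ) (L : ℕ)
    (Hstar H : Matrix (Fin N) (Fin d) ℝ)
    (hHstar : Hstar = (1 / (1 + α)) • ∑' ℓ : ℕ, (α / (1 + α)) ^ ℓ • (Ahat ^ ℓ * X))
    (hH : H = (1 / (1 + α)) • ∑ ℓ ∈ Finset.range (L + 1), (α / (1 + α)) ^ ℓ • (Ahat ^ ℓ * X)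
          + (α / (1 + α)) ^ (L + 1) • (Ahat ^ L * X))
    (μ : ℕ → ℕ → ℝ)
    (hμ : ∀ L₁ L₂, μ L₁ L₂ = ⨆ i : Fin N, |hA.eigenvalues i ^ L₁ - hA.eigenvalues i ^ L₂|) :
    Real.sqrt (∑ i, ∑ k, (H i k - Hstar i k) ^ 2)
      ≤ (∑' ℓ : ℕ, α ^ (L + 1 + ℓ) / (1 + α) ^ (L + 1 + ℓ + 1) *
          ‖Ahat ^ (L + 1 + ℓ) - Ahat ^ L‖ * Real.sqrt (∑ i, ∑ k, (X i k) ^ 2))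
    ∧ (∑' ℓ : ℕ, α ^ (L + 1 + ℓ) / (1 + α) ^ (L + 1 + ℓ + 1) *
          ‖Ahat ^ (L + 1 + ℓ) - Ahat ^ L‖ * Real.sqrt (∑ i, ∑ k, (X i k) ^ 2))
      ≤ (α / (1 + α)) ^ (L + 1) * Real.sqrt (∑ i, ∑ k, (X i k) ^ 2) *
          ⨆ ℓ : ℕ, μ L (L + ℓ + 1) := by
  have h1α : (0:ℝ) < 1 + α := by linarith
  set q : ℝ := α / (1 + α) with hq
  have hq0 : 0 ≤ q := by positivity
  have hq1 : q < 1 := by rw [hq, div_lt_one h1α]; linarith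
  set fX : ℝ := Real.sqrt (∑ i, ∑ k, (X i k) ^ 2) with hfX
  have hfX0 : 0 ≤ fX := Real.sqrt_nonneg _
  have hApow : ∀ k, ‖Ahat ^ k‖ ≤ 1 := herm_pow_norm_le hA heig
  set f : ℕ → Matrix (Fin N) (Fin d) ℝ := fun ℓ => q ^ ℓ • (Ahat ^ ℓ * X) with hf
  have hfnorm : ∀ ℓ, ‖f ℓ‖ ≤ ‖X‖ * q ^ ℓ := by
    intro ℓ
    have h1 : ‖f ℓ‖ = q ^ ℓ * ‖Ahat ^ ℓ * X‖ := by
      rw [hf]; rw [norm_smul, Real.norm_eq_abs, abs_of_nonneg (by positivity)]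
    rw [h1, mul_comm (‖X‖)]
    apply mul_le_mul_of_nonneg_left _ (by positivity)
    calc ‖Ahat ^ ℓ * X‖ ≤ ‖Ahat ^ ℓ‖ * ‖X‖ := Matrix.l2_opNorm_mul _ _
      _ ≤ 1 * ‖X‖ := mul_le_mul_of_nonneg_right (hApow ℓ) (norm_nonneg _)
      _ = ‖X‖ := one_mul _
  have hfsum : Summable f :=
    Summable.of_norm_bounded ((summable_geometric_of_lt_one hq0 hq1).mul_left ‖X‖) hfnorm
  have hcsum : Summable (fun ℓ : ℕ => (1/(1+α)) * q ^ (L + 1 + ℓ)) := by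
    have : ∀ ℓ : ℕ, (1/(1+α)) * q ^ (L + 1 + ℓ) = ((1/(1+α)) * q ^ (L+1)) * q ^ ℓ := by
      intro ℓ; rw [pow_add]; ring
    exact ((summable_geometric_of_lt_one hq0 hq1).mul_left _).congr fun ℓ => (this ℓ).symm
  have hcsumval : ∑' ℓ : ℕ, (1/(1+α)) * q ^ (L + 1 + ℓ) = q ^ (L + 1) := by
    have h1 : ∀ ℓ : ℕ, (1/(1+α)) * q ^ (L + 1 + ℓ) = ((1/(1+α)) * q ^ (L+1)) * q ^ ℓ := by
      intro ℓ; rw [pow_add]; ring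
    rw [tsum_congr h1, tsum_mul_left, tsum_geometric_of_lt_one hq0 hq1]
    have h2 : 1 - q = 1/(1+α) := by rw [hq]; field_simp; ring
    rw [h2]
    rw [one_div, inv_inv]
    field_simp
  -- summability of pieces
  have hsum1 : Summable (fun ℓ : ℕ => ((1/(1+α)) * q ^ (L + 1 + ℓ)) • (Ahat ^ L * X)) :=
    hcsum.smul_const _
  have hsum2 : Summable (fun ℓ : ℕ => (1/(1+α)) • f (ℓ + (L+1))) :=
    (((summable_nat_add_iff (L+1)).2 hfsum).const_smul _)
  have hterm : ∀ ℓ : ℕ, (((1/(1+α)) * q ^ (L + 1 + ℓ)) • ((Ahat ^ L - Ahat ^ (L + 1 + ℓ)) * X))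
      = (((1/(1+α)) * q ^ (L + 1 + ℓ)) • (Ahat ^ L * X)) - (1/(1+α)) • f (ℓ + (L+1)) := by
    intro ℓ
    rw [show L + 1 + ℓ = ℓ + (L + 1) from by omega]
    rw [Matrix.sub_mul, smul_sub]
    congr 1
    rw [hf, smul_smul]
  set g : ℕ → Matrix (Fin N) (Fin d) ℝ :=
    fun ℓ => ((1/(1+α)) * q ^ (L + 1 + ℓ)) • ((Ahat ^ L - Ahat ^ (L + 1 + ℓ)) * X) with hg
  have hgsum : Summable g := (hsum1.sub hsum2).congr fun ℓ => (hterm ℓ).symm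
  have hdiff : H - Hstar = ∑' ℓ : ℕ, g ℓ := by
    have hsplit := Summable.sum_add_tsum_nat_add (L+1) hfsum
    have htail : Hstar = (1/(1+α)) • (∑ ℓ ∈ Finset.range (L+1), f ℓ)
        + (1/(1+α)) • (∑' ℓ : ℕ, f (ℓ + (L+1))) := by
      rw [hHstar, ← hsplit, smul_add]
    rw [hH, htail, hg]
    rw [tsum_congr hterm, Summable.tsum_sub hsum1 hsum2, Summable.tsum_smul_const hcsum, hcsumval,
      Summable.tsum_const_smul _ ((summable_nat_add_iff (L+1)).2 hfsum)]
    abel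
  set T : ℕ → ℝ := fun ℓ => α ^ (L + 1 + ℓ) / (1 + α) ^ (L + 1 + ℓ + 1) *
    ‖Ahat ^ (L + 1 + ℓ) - Ahat ^ L‖ * fX with hT
  have hceq : ∀ ℓ : ℕ, (1/(1+α)) * q ^ (L + 1 + ℓ) = α ^ (L + 1 + ℓ) / (1 + α) ^ (L + 1 + ℓ + 1) := by
    intro ℓ
    rw [hq, div_pow, pow_succ]
    field_simp
  have hc0 : ∀ ℓ : ℕ, 0 ≤ (1/(1+α)) * q ^ (L + 1 + ℓ) := fun ℓ => by positivity
  have hTval : ∀ ℓ, T ℓ = ((1/(1+α)) * q ^ (L + 1 + ℓ)) * ‖Ahat ^ (L + 1 + ℓ) - Ahat ^ L‖ * fX := by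
    intro ℓ; rw [hT, hceq ℓ]
  have hnorm2 : ∀ ℓ : ℕ, ‖Ahat ^ (L + 1 + ℓ) - Ahat ^ L‖ ≤ 2 := by
    intro ℓ
    calc ‖Ahat ^ (L + 1 + ℓ) - Ahat ^ L‖ ≤ ‖Ahat ^ (L + 1 + ℓ)‖ + ‖Ahat ^ L‖ := norm_sub_le _ _
      _ ≤ 1 + 1 := add_le_add (hApow _) (hApow _)
      _ = 2 := by norm_num
  have hTsum : Summable T := by
    apply Summable.of_nonneg_of_le (fun ℓ => by rw [hTval]; positivity)
      (fun ℓ => ?_) (hcsum.mul_right (2 * fX))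
    rw [hTval]
    calc ((1/(1+α)) * q ^ (L + 1 + ℓ)) * ‖Ahat ^ (L + 1 + ℓ) - Ahat ^ L‖ * fX
        ≤ ((1/(1+α)) * q ^ (L + 1 + ℓ)) * 2 * fX := by
          apply mul_le_mul_of_nonneg_right _ hfX0
          exact mul_le_mul_of_nonneg_left (hnorm2 ℓ) (hc0 ℓ)
      _ = (1/(1+α)) * q ^ (L + 1 + ℓ) * (2 * fX) := by ring
  constructor
  · -- first inequality
    have hL : Real.sqrt (∑ i, ∑ k, (H i k - Hstar i k) ^ 2) = ‖eL N d (H - Hstar)‖ := by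
      rw [eL_norm]
      congr 1
    rw [hL, hdiff]
    set eC : Matrix (Fin N) (Fin d) ℝ →L[ℝ] EuclideanSpace ℝ (Fin N × Fin d) :=
      LinearMap.toContinuousLinearMap (eL N d) with heC
    have heCeq : ∀ M, eC M = eL N d M := fun _ => rfl
    have hgn : ∀ ℓ, ‖eC (g ℓ)‖ ≤ T ℓ := by
      intro ℓ
      have e1 : eC ((1 / (1 + α) * q ^ (L + 1 + ℓ)) • ((Ahat ^ L - Ahat ^ (L + 1 + ℓ)) * X))
          = (1 / (1 + α) * q ^ (L + 1 + ℓ)) • eC ((Ahat ^ L - Ahat ^ (L + 1 + ℓ)) * X) :=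
        eC.map_smul _ _
      rw [hg, e1, norm_smul, Real.norm_eq_abs, abs_of_nonneg (hc0 ℓ), hTval ℓ, heCeq, eL_norm]
      have hb : Real.sqrt (∑ i, ∑ k, (((Ahat ^ L - Ahat ^ (L + 1 + ℓ)) * X) i k) ^ 2)
          ≤ ‖Ahat ^ (L + 1 + ℓ) - Ahat ^ L‖ * fX := by
        calc Real.sqrt (∑ i, ∑ k, (((Ahat ^ L - Ahat ^ (L + 1 + ℓ)) * X) i k) ^ 2)
            ≤ ‖Ahat ^ L - Ahat ^ (L + 1 + ℓ)‖ * fX := by rw [hfX]; exact frob_mul_le _ _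
          _ = ‖Ahat ^ (L + 1 + ℓ) - Ahat ^ L‖ * fX := by rw [norm_sub_rev]
      calc (1 / (1 + α) * q ^ (L + 1 + ℓ)) *
            Real.sqrt (∑ i, ∑ k, (((Ahat ^ L - Ahat ^ (L + 1 + ℓ)) * X) i k) ^ 2)
          ≤ (1 / (1 + α) * q ^ (L + 1 + ℓ)) * (‖Ahat ^ (L + 1 + ℓ) - Ahat ^ L‖ * fX) :=
            mul_le_mul_of_nonneg_left hb (hc0 ℓ)
        _ = 1 / (1 + α) * q ^ (L + 1 + ℓ) * ‖Ahat ^ (L + 1 + ℓ) - Ahat ^ L‖ * fX := by ring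
    have hgnsum : Summable (fun ℓ => ‖eC (g ℓ)‖) :=
      Summable.of_nonneg_of_le (fun ℓ => norm_nonneg _) hgn hTsum
    calc ‖eL N d (∑' ℓ, g ℓ)‖ = ‖∑' ℓ, eC (g ℓ)‖ := by rw [← heCeq, eC.map_tsum hgsum]
      _ ≤ ∑' ℓ, ‖eC (g ℓ)‖ := norm_tsum_le_tsum_norm hgnsum
      _ ≤ ∑' ℓ, T ℓ := Summable.tsum_le_tsum hgn hgnsum hTsum
  · -- second inequality
    set S : ℝ := ⨆ ℓ : ℕ, μ L (L + ℓ + 1) with hS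
    have hμ0 : ∀ k, 0 ≤ μ L k := by
      intro k; rw [hμ]; exact Real.iSup_nonneg fun i => abs_nonneg _
    have hμ2 : ∀ k, μ L k ≤ 2 := by
      intro k; rw [hμ]
      apply Real.iSup_le _ (by norm_num)
      intro i
      calc |hA.eigenvalues i ^ L - hA.eigenvalues i ^ k|
          ≤ |hA.eigenvalues i ^ L| + |hA.eigenvalues i ^ k| := abs_sub _ _
        _ ≤ 1 + 1 := by
            rw [abs_pow, abs_pow]
            exact add_le_add (pow_le_one₀ (abs_nonneg _) (heig i))
              (pow_le_one₀ (abs_nonneg _) (heig i))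
        _ = 2 := by norm_num
    have hbdd : BddAbove (Set.range fun ℓ : ℕ => μ L (L + ℓ + 1)) := by
      refine ⟨2, ?_⟩; rintro x ⟨ℓ, rfl⟩; exact hμ2 _
    have hS0 : 0 ≤ S := Real.iSup_nonneg fun ℓ => hμ0 _
    have hnormS : ∀ ℓ : ℕ, ‖Ahat ^ (L + 1 + ℓ) - Ahat ^ L‖ ≤ S := by
      intro ℓ
      have h1 : ‖Ahat ^ (L + 1 + ℓ) - Ahat ^ L‖ ≤ μ L (L + ℓ + 1) := by
        rw [hμ]
        apply herm_pow_sub_norm_le hA _ _ _ (Real.iSup_nonneg fun i => abs_nonneg _)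
        intro i
        rw [abs_sub_comm, show L + 1 + ℓ = L + ℓ + 1 from by omega]
        exact le_ciSup (f := fun i : Fin N => |hA.eigenvalues i ^ L - hA.eigenvalues i ^ (L + ℓ + 1)|)
          (Set.Finite.bddAbove (Set.finite_range _)) i
      exact h1.trans (le_ciSup hbdd ℓ)
    have hterm2 : ∀ ℓ : ℕ, T ℓ ≤ ((1/(1+α)) * q ^ (L + 1 + ℓ)) * (S * fX) := by
      intro ℓ
      rw [hTval, mul_assoc]
      apply mul_le_mul_of_nonneg_left _ (hc0 ℓ)
      exact mul_le_mul_of_nonneg_right (hnormS ℓ) hfX0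
    calc ∑' ℓ, T ℓ ≤ ∑' ℓ : ℕ, ((1/(1+α)) * q ^ (L + 1 + ℓ)) * (S * fX) :=
          Summable.tsum_le_tsum hterm2 hTsum (hcsum.mul_right _)
      _ = (∑' ℓ : ℕ, (1/(1+α)) * q ^ (L + 1 + ℓ)) * (S * fX) := tsum_mul_right
      _ = q ^ (L+1) * fX * S := by rw [hcsumval]; ring
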